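/- Let (R, m) be a Noetherian local ring, I an ideal of R, and r ∈ I \ I^2 an element whose initial form r* in degree 1 of the associated graded ring G(I) = ⊕_{n≥0} I^n/I^{n+1} is a non-zero-divisor on G(I). Then r is a superficial element of I, i.e., there exists c ∈ ℕ such that for all n ≥ c, (I^{n+1} : r) ∩ I^c = I^n. -/
import Mathlib

/-- Let `(R,m)` be Noetherian local, `I` an ideal and `r ∈ I \ I²` such that the initial
form of `r` is a non-zero-divisor on the associated graded ring `G(I)` (expressed
element-wise: for every `n` and `x ∈ I^n`, if `r·x ∈ I^{n+2}` then `x ∈ I^{n+1}`).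
Then `r` is a superficial element of `I`: there is `c` with
`(I^{n+1} : r) ∩ I^c = I^n` for all `n ≥ c`. -/
theorem stmt7 {R : Type*} [CommRing R] [IsNoetherianRing R] [IsLocalRing R]
    (I : Ideal R) (r : R) (hrI : r ∈ I) (hr2 : r ∉ I ^ 2)
    (hnzd : ∀ n : ℕ, ∀ x ∈ I ^ n, r * x ∈ I ^ (n + 2) → x ∈ I ^ (n + 1)) :
    ∃ c : ℕ, ∀ n ≥ c, (I ^ (n + 1)).colon (Ideal.span {r}) ⊓ I ^ c = I ^ n := by
  refine ⟨0, fun n _ => ?_⟩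
  have key : ∀ k, ∀ x : R, r * x ∈ I ^ (n + 1) → k ≤ n → x ∈ I ^ k := by
    intro k
    induction k with
    | zero => intro x _ _; simp
    | succ k ih =>
      intro x hx hk
      have h1 : x ∈ I ^ k := ih x hx (Nat.le_of_succ_le hk)
      exact hnzd k x h1 (Ideal.pow_le_pow_right (by omega) hx)
  ext x
  simp only [Submodule.mem_inf, pow_zero, Ideal.one_eq_top, Submodule.mem_top, and_true,
    Ideal.mem_colon_span_singleton]
  constructor
  · intro hx
    exact key n x (by rwa [mul_comm] at hx) le_rfl
  · intro hx
    have : x * r ∈ I ^ n * I := Ideal.mul_mem_mul hx hrI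
    rwa [← pow_succ] at this
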